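/- Let C be a linear code of length n over R and define C₁, C₂, C₃ ⊆ F_pⁿ by C₁ = {x : ∃y,z, η₁x + η₂y + η₃z ∈ C}, and similarly C₂, C₃. Then C = η₁C₁ ⊕ η₂C₂ ⊕ η₃C₃, and this expression is unique. -/

import Mathlib

open Polynomial

abbrev Rp (p : ℕ) := AdjoinRoot (X ^ 3 - X : (ZMod p)[X])
noncomputable def uu (p : ℕ) : Rp p := AdjoinRoot.root _
noncomputable def am (p : ℕ) : ZMod p →+* Rp p := algebraMap (ZMod p) (Rp p)
noncomputable def eta1 (p : ℕ) : Rp p := 1 - uu p ^ 2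
noncomputable def eta2 (p : ℕ) : Rp p := am p 2⁻¹ * (uu p + uu p ^ 2)
noncomputable def eta3 (p : ℕ) : Rp p := am p 2⁻¹ * (-uu p + uu p ^ 2)

/-- Encode vectors `x, y, z` over `F_p` as `η₁x + η₂y + η₃z ∈ Rⁿ`. -/
noncomputable def encEta (p n : ℕ) (x y z : Fin n → ZMod p) : Fin n → Rp p :=
  fun i => eta1 p * am p (x i) + eta2 p * am p (y i) + eta3 p * am p (z i)

noncomputable def comp1 (p n : ℕ) (C : Set (Fin n → Rp p)) : Set (Fin n → ZMod p) :=
  {x | ∃ y z, encEta p n x y z ∈ C}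
noncomputable def comp2 (p n : ℕ) (C : Set (Fin n → Rp p)) : Set (Fin n → ZMod p) :=
  {y | ∃ x z, encEta p n x y z ∈ C}
noncomputable def comp3 (p n : ℕ) (C : Set (Fin n → Rp p)) : Set (Fin n → ZMod p) :=
  {z | ∃ x y, encEta p n x y z ∈ C}

section Aux
variable (p : ℕ) [Fact p.Prime]

lemma fmonic : (X ^ 3 - X : (ZMod p)[X]).Monic := by
  have : ((X:(ZMod p)[X])).degree < (3 : ℕ) := by
    apply lt_of_le_of_lt Polynomial.degree_X_le; norm_num
  exact Polynomial.monic_X_pow_sub this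

lemma fnatdeg : (X ^ 3 - X : (ZMod p)[X]).natDegree = 3 := by
  compute_degree!

lemma u_cube : uu p ^ 3 = uu p := by
  have := AdjoinRoot.eval₂_root (X ^ 3 - X : (ZMod p)[X])
  simp [uu] at this ⊢
  linear_combination this

noncomputable def bb : Module.Basis (Fin 3) (ZMod p) (Rp p) :=
  ((AdjoinRoot.powerBasis (f := (X ^ 3 - X : (ZMod p)[X])) (fmonic p).ne_zero).basis).reindex
    (finCongr (by rw [AdjoinRoot.powerBasis_dim, fnatdeg p]))

lemma bb_apply (i : Fin 3) : bb p i = uu p ^ (i : ℕ) := by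
  rw [bb, Module.Basis.reindex_apply, PowerBasis.basis_eq_pow]
  simp [AdjoinRoot.powerBasis_gen, uu]

lemma exists_coords (s : Rp p) : ∃ c : Fin 3 → ZMod p,
    s = am p (c 0) + am p (c 1) * uu p + am p (c 2) * uu p ^ 2 := by
  refine ⟨(bb p).repr s, ?_⟩
  have h := ((bb p).sum_repr s).symm
  rw [Fin.sum_univ_three] at h
  simpa [bb_apply, Algebra.smul_def, am, mul_comm] using h

lemma coords_inj (c d : Fin 3 → ZMod p)
    (h : am p (c 0) + am p (c 1) * uu p + am p (c 2) * uu p ^ 2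
       = am p (d 0) + am p (d 1) * uu p + am p (d 2) * uu p ^ 2) : c = d := by
  have h2 : ∑ i : Fin 3, (c i - d i) • bb p i = 0 := by
    unfold am at h
    rw [Fin.sum_univ_three]
    simp only [bb_apply, sub_smul, Algebra.smul_def, map_sub]
    simp only [AdjoinRoot.algebraMap_eq] at h ⊢
    norm_num
    linear_combination h
  have := Fintype.linearIndependent_iff.mp (bb p).linearIndependent _ h2
  funext i
  exact sub_eq_zero.mp (this i)

lemma two_ne (hp : p ≠ 2) : (2 : ZMod p) ≠ 0 := by
  intro h
  have h2 : ((2:ℕ) : ZMod p) = 0 := by exact_mod_cast h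
  rw [ZMod.natCast_eq_zero_iff] at h2
  have hpp := (Fact.out : p.Prime)
  have := Nat.le_of_dvd (by norm_num) h2
  have := hpp.two_le
  omega

lemma half_two (hp : p ≠ 2) : (2⁻¹ : ZMod p) * 2 = 1 := inv_mul_cancel₀ (two_ne p hp)

lemma am_half_two (hp : p ≠ 2) : am p 2⁻¹ * 2 = 1 := by
  rw [show (2 : Rp p) = am p 2 from (map_ofNat (am p) 2).symm,
    ← map_mul, half_two p hp, map_one]

lemma eta11 : eta1 p * eta1 p = eta1 p := by
  unfold eta1; linear_combination (uu p) * u_cube p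

lemma eta12 : eta1 p * eta2 p = 0 := by
  unfold eta1 eta2
  linear_combination (-(am p 2⁻¹) * (1 + uu p)) * u_cube p

lemma eta13 : eta1 p * eta3 p = 0 := by
  unfold eta1 eta3
  linear_combination ((am p 2⁻¹) * (1 - uu p)) * u_cube p

lemma eta22 (hp : p ≠ 2) : eta2 p * eta2 p = eta2 p := by
  unfold eta2
  linear_combination ((am p 2⁻¹)^2 * (uu p + 2)) * u_cube p
    + ((am p 2⁻¹) * (uu p + uu p ^ 2)) * am_half_two p hp

lemma eta33 (hp : p ≠ 2) : eta3 p * eta3 p = eta3 p := by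
  unfold eta3
  linear_combination ((am p 2⁻¹)^2 * (uu p - 2)) * u_cube p
    + ((am p 2⁻¹) * (-uu p + uu p ^ 2)) * am_half_two p hp

lemma eta23 : eta2 p * eta3 p = 0 := by
  unfold eta2 eta3
  linear_combination ((am p 2⁻¹)^2 * uu p) * u_cube p

lemma eta_decomp (a b c : ZMod p) :
    eta1 p * am p a + eta2 p * am p b + eta3 p * am p c
      = am p a + am p (2⁻¹*(b-c)) * uu p + am p (-a + 2⁻¹*(b+c)) * uu p ^ 2 := by
  unfold eta1 eta2 eta3
  simp only [map_mul, map_add, map_sub, map_neg]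
  ring

lemma exists_abc (hp : p ≠ 2) (s : Rp p) : ∃ t : ZMod p × ZMod p × ZMod p,
    s = eta1 p * am p t.1 + eta2 p * am p t.2.1 + eta3 p * am p t.2.2 := by
  obtain ⟨c, hc⟩ := exists_coords p s
  refine ⟨(c 0, c 1 + c 2 + c 0, -(c 1) + c 2 + c 0), ?_⟩
  rw [eta_decomp]
  have h2 := half_two p hp
  have e1 : (2⁻¹:ZMod p) * ((c 1 + c 2 + c 0) - (-(c 1) + c 2 + c 0)) = c 1 := by
    linear_combination (c 1) * h2
  have e2 : -(c 0) + (2⁻¹:ZMod p) * ((c 1 + c 2 + c 0) + (-(c 1) + c 2 + c 0)) = c 2 := by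
    linear_combination (c 2 + c 0) * h2
  rw [e1, e2]
  exact hc

lemma abc_unique (hp : p ≠ 2) (a b c a' b' c' : ZMod p)
    (h : eta1 p * am p a + eta2 p * am p b + eta3 p * am p c
       = eta1 p * am p a' + eta2 p * am p b' + eta3 p * am p c') :
    a = a' ∧ b = b' ∧ c = c' := by
  rw [eta_decomp, eta_decomp] at h
  have hcd := coords_inj p ![a, 2⁻¹*(b-c), -a+2⁻¹*(b+c)] ![a', 2⁻¹*(b'-c'), -a'+2⁻¹*(b'+c')]
    (by simpa using h)
  have h0 : a = a' := by simpa using congrFun hcd 0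
  have h1 : (2⁻¹:ZMod p)*(b-c) = 2⁻¹*(b'-c') := by simpa using congrFun hcd 1
  have h2 : -a+(2⁻¹:ZMod p)*(b+c) = -a'+2⁻¹*(b'+c') := by simpa using congrFun hcd 2
  have hinv : (2⁻¹ : ZMod p) ≠ 0 := inv_ne_zero (two_ne p hp)
  have hx : b - c = b' - c' := mul_left_cancel₀ hinv h1
  have hy : b + c = b' + c' := mul_left_cancel₀ hinv (by linear_combination h2 + h0)
  refine ⟨h0, ?_, ?_⟩
  · exact mul_left_cancel₀ (two_ne p hp) (show (2:ZMod p)*b = 2*b' by linear_combination hx + hy)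
  · exact mul_left_cancel₀ (two_ne p hp) (show (2:ZMod p)*c = 2*c' by linear_combination hy - hx)

end Aux

theorem code_decomposition (p n : ℕ) [Fact p.Prime] (hp : p ≠ 2)
    (C : Submodule (Rp p) (Fin n → Rp p)) :
    (∀ x ∈ comp1 p n C, ∀ y ∈ comp2 p n C, ∀ z ∈ comp3 p n C, encEta p n x y z ∈ C) ∧
    (∀ r ∈ C, ∃! t : (Fin n → ZMod p) × (Fin n → ZMod p) × (Fin n → ZMod p),
      t.1 ∈ comp1 p n C ∧ t.2.1 ∈ comp2 p n C ∧ t.2.2 ∈ comp3 p n C ∧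
      r = encEta p n t.1 t.2.1 t.2.2) := by
  constructor
  · intro x hx y hy z hz
    obtain ⟨y1, z1, h1⟩ := hx
    obtain ⟨x2, z2, h2⟩ := hy
    obtain ⟨x3, y3, h3⟩ := hz
    have key : encEta p n x y z
        = eta1 p • encEta p n x y1 z1 + eta2 p • encEta p n x2 y z2
          + eta3 p • encEta p n x3 y3 z := by
      funext i
      simp only [encEta, Pi.add_apply, Pi.smul_apply, smul_eq_mul]
      linear_combination -((am p (x i)) * eta11 p) - (am p (y1 i)) * eta12 p
        - (am p (z1 i)) * eta13 p - (am p (x2 i)) * eta12 p - (am p (y i)) * eta22 p hp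
        - (am p (z2 i)) * eta23 p - (am p (x3 i)) * eta13 p - (am p (y3 i)) * eta23 p
        - (am p (z i)) * eta33 p hp
    rw [key]
    exact add_mem (add_mem (Submodule.smul_mem _ _ h1) (Submodule.smul_mem _ _ h2))
      (Submodule.smul_mem _ _ h3)
  · intro r hr
    choose f hf using exists_abc p hp
    set x : Fin n → ZMod p := fun i => (f (r i)).1 with hxdef
    set y : Fin n → ZMod p := fun i => (f (r i)).2.1 with hydef
    set z : Fin n → ZMod p := fun i => (f (r i)).2.2 with hzdef
    have hrx : r = encEta p n x y z := by
      funext i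
      simpa [encEta, hxdef, hydef, hzdef] using hf (r i)
    refine ⟨(x, y, z), ⟨⟨y, z, hrx ▸ hr⟩, ⟨x, z, hrx ▸ hr⟩, ⟨x, y, hrx ▸ hr⟩, hrx⟩, ?_⟩
    rintro ⟨x', y', z'⟩ ⟨-, -, -, heq⟩
    have hEnc : ∀ i, eta1 p * am p (x' i) + eta2 p * am p (y' i) + eta3 p * am p (z' i)
        = eta1 p * am p (x i) + eta2 p * am p (y i) + eta3 p * am p (z i) := by
      intro i
      have := congrFun (heq.symm.trans hrx) i
      simpa [encEta] using this
    have hall : ∀ i, x' i = x i ∧ y' i = y i ∧ z' i = z i :=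
      fun i => abc_unique p hp _ _ _ _ _ _ (hEnc i)
    have hx' : x' = x := funext fun i => (hall i).1
    have hy' : y' = y := funext fun i => (hall i).2.1
    have hz' : z' = z := funext fun i => (hall i).2.2
    simp [hx', hy', hz']
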